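/- Let γ ∈ (0,1), c_ρ ≥ 1 with γ²√c_ρ < 1. Suppose an operator T on pairs (M_μ, M_Σ) satisfies ‖(TM - TM')_μ‖_ν ≤ γ‖Δ_μ‖_ν and ‖(TM - TM')_Σ‖_{ν⊗ν} ≤ 2γ‖Δ_μ‖_ν + γ²√c_ρ ‖Δ_Σ‖_{ν⊗ν}, where Δ = M - M'. Then for any β ∈ (0, (1-γ²√c_ρ)/(2γ)), T is a κ-contraction with κ = max{γ, 2βγ + γ²√c_ρ} < 1 in the norm ‖M‖_{ν,β} = max{‖M_μ‖_ν, β‖M_Σ‖_{ν⊗ν}}. -/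
import Mathlib


theorem stmt12
    (V W : Type*) [NormedAddCommGroup V] [NormedAddCommGroup W]
    (γ cρ : ℝ) (hγ : γ ∈ Set.Ioo (0:ℝ) 1) (hcρ : 1 ≤ cρ)
    (hsmall : γ ^ 2 * Real.sqrt cρ < 1)
    (β : ℝ) (hβ : β ∈ Set.Ioo (0:ℝ) ((1 - γ ^ 2 * Real.sqrt cρ) / (2 * γ)))
    (T : V × W → V × W)
    (hTμ : ∀ M M' : V × W, ‖(T M - T M').1‖ ≤ γ * ‖(M - M').1‖)
    (hTS : ∀ M M' : V × W, ‖(T M - T M').2‖ ≤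
      2 * γ * ‖(M - M').1‖ + γ ^ 2 * Real.sqrt cρ * ‖(M - M').2‖)
    (κ : ℝ) (hκ : κ = max γ (2 * β * γ + γ ^ 2 * Real.sqrt cρ)) :
    κ < 1 ∧
    ∀ M M' : V × W,
      max ‖(T M - T M').1‖ (β * ‖(T M - T M').2‖) ≤
        κ * max ‖(M - M').1‖ (β * ‖(M - M').2‖) := by
  obtain ⟨hγ0, hγ1⟩ := hγ
  obtain ⟨hβ0, hβu⟩ := hβ
  have h2γ : (0:ℝ) < 2 * γ := by linarith
  have hβ2 : 2 * β * γ + γ ^ 2 * Real.sqrt cρ < 1 := by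
    have := (lt_div_iff₀ h2γ).mp hβu
    nlinarith
  have hκ1 : κ < 1 := by
    rw [hκ]; exact max_lt hγ1 hβ2
  refine ⟨hκ1, fun M M' => ?_⟩
  set a := ‖(M - M').1‖ with ha
  set b := ‖(M - M').2‖ with hb
  have ha0 : 0 ≤ a := norm_nonneg _
  have hb0 : 0 ≤ b := norm_nonneg _
  have hm1 : a ≤ max a (β * b) := le_max_left _ _
  have hm2 : β * b ≤ max a (β * b) := le_max_right _ _
  have hs0 : 0 ≤ Real.sqrt cρ := Real.sqrt_nonneg _
  refine max_le ?_ ?_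
  · calc ‖(T M - T M').1‖ ≤ γ * a := hTμ M M'
      _ ≤ γ * max a (β * b) := by nlinarith
      _ ≤ κ * max a (β * b) := by
          have : γ ≤ κ := hκ ▸ le_max_left _ _
          have hm0 : 0 ≤ max a (β * b) := le_trans ha0 hm1
          nlinarith
  · calc β * ‖(T M - T M').2‖
        ≤ β * (2 * γ * a + γ ^ 2 * Real.sqrt cρ * b) := by
          have := hTS M M'; nlinarith
      _ = 2 * β * γ * a + γ ^ 2 * Real.sqrt cρ * (β * b) := by ring
      _ ≤ (2 * β * γ + γ ^ 2 * Real.sqrt cρ) * max a (β * b) := by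
          nlinarith [mul_le_mul_of_nonneg_left hm1 (by positivity : (0:ℝ) ≤ 2 * β * γ),
            mul_le_mul_of_nonneg_left hm2 (by positivity : (0:ℝ) ≤ γ ^ 2 * Real.sqrt cρ)]
      _ ≤ κ * max a (β * b) := by
          have : 2 * β * γ + γ ^ 2 * Real.sqrt cρ ≤ κ := hκ ▸ le_max_right _ _
          have hm0 : 0 ≤ max a (β * b) := le_trans ha0 hm1
          nlinarith
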